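/- (The affine gl_1 non-stationary equation and its solution, equation (1.17).) Let q, κ, d, d̄ ∈ ℂ with |q| < 1 and |κ| < 1, and set ρ := max(1, |d|, |d̄|, |d·d̄|). For every x ∈ ℂ with |x| < 1/ρ the series ∑_{n≥1} (1−d^n)(1−d̄^n)/(n·(1−q^n)·(1−κ^n)) · x^n converges absolutely; define ψ(x) := exp(−∑_{n≥1} (1−d^n)(1−d̄^n)/(n·(1−q^n)·(1−κ^n)) · x^n). Then for all x with |x| < 1/ρ one has ((x;q)_∞ · (d·d̄·x;q)_∞ / ((d·x;q)_∞ · (d̄·x;q)_∞)) · ψ(κx) = ψ(x); that is, ψ solves the gl_1 non-stationary equation H^{gl_1} ψ = ψ, where H^{gl_1} = (φ(x)·φ(dd̄x)/(φ(dx)·φ(d̄x))) · T_{κ,x} with φ(z) = (z;q)_∞ and T_{κ,x} the shift x ↦ κx. -/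

import Mathlib

/-!
The affine gl₁ non-stationary equation and its solution, equation (1.17):
with `φ(z) = (z;q)_∞ = ∏_{n≥0}(1−z qⁿ)` and
`ψ(x) = exp(−∑_{n≥1} (1−dⁿ)(1−d̄ⁿ)/(n(1−qⁿ)(1−κⁿ)) xⁿ)`, one has
`(φ(x)φ(dd̄x)/(φ(dx)φ(d̄x))) ψ(κx) = ψ(x)` for `|x| < 1/ρ`,
`ρ = max(1,|d|,|d̄|,|dd̄|)`.
-/

set_option maxHeartbeats 1000000

noncomputable section

/-- the `n`-th term (indexed from `0`, corresponding to the summand `n+1`) of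
the exponent series of `ψ`. -/
def glTerm (q κ d e x : ℂ) (n : ℕ) : ℂ :=
  (1 - d ^ (n + 1)) * (1 - e ^ (n + 1))
    / ((n + 1 : ℂ) * (1 - q ^ (n + 1)) * (1 - κ ^ (n + 1))) * x ^ (n + 1)

/-- `ψ(x) = exp(−∑_{n≥1} (1−dⁿ)(1−d̄ⁿ)/(n(1−qⁿ)(1−κⁿ)) xⁿ)`. -/
def glPsi (q κ d e x : ℂ) : ℂ := Complex.exp (-∑' n : ℕ, glTerm q κ d e x n)

/-- `(z;q)_∞ = ∏_{n≥0}(1 − z qⁿ)`. -/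
def qPochInf (z q : ℂ) : ℂ := ∏' n : ℕ, (1 - z * q ^ n)


def sTerm (q z : ℂ) (k : ℕ) : ℂ := z ^ (k + 1) / ((k + 1 : ℂ) * (1 - q ^ (k + 1)))

def gAux (q z : ℂ) (p : ℕ × ℕ) : ℂ := -((z * q ^ p.1) ^ (p.2 + 1) / ((p.2 : ℂ) + 1))

lemma one_sub_pow_ne {q : ℂ} (hq : ‖q‖ < 1) (k : ℕ) : (1 : ℂ) - q ^ (k + 1) ≠ 0 := by
  have : ‖q ^ (k + 1)‖ < 1 := by
    rw [norm_pow]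
    exact pow_lt_one₀ (norm_nonneg q) hq (Nat.succ_ne_zero k)
  intro h
  rw [sub_eq_zero] at h
  rw [← h] at this
  simp at this

lemma norm_one_sub_pow {q : ℂ} (hq : ‖q‖ < 1) (k : ℕ) :
    1 - ‖q‖ ≤ ‖(1 : ℂ) - q ^ (k + 1)‖ := by
  have h1 : ‖q ^ (k + 1)‖ ≤ ‖q‖ := by
    rw [norm_pow]
    calc ‖q‖ ^ (k + 1) ≤ ‖q‖ ^ 1 :=
      pow_le_pow_of_le_one (norm_nonneg q) hq.le (by omega)
    _ = ‖q‖ := pow_one _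
  calc 1 - ‖q‖ ≤ 1 - ‖q ^ (k+1)‖ := by linarith
  _ = ‖(1:ℂ)‖ - ‖q ^ (k+1)‖ := by simp
  _ ≤ ‖(1:ℂ) - q ^ (k+1)‖ := norm_sub_norm_le _ _

lemma norm_sTerm_le {q z : ℂ} (hq : ‖q‖ < 1) (k : ℕ) :
    ‖sTerm q z k‖ ≤ ‖z‖ ^ (k + 1) / (1 - ‖q‖) := by
  rw [sTerm, norm_div, norm_mul, norm_pow]
  have h1 : 1 - ‖q‖ ≤ ‖((k : ℂ) + 1)‖ * ‖(1:ℂ) - q ^ (k + 1)‖ := by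
    have h2 : (1 : ℝ) ≤ ‖((k : ℂ) + 1)‖ := by
      have : ((k : ℂ) + 1) = ((k + 1 : ℕ) : ℂ) := by push_cast; ring
      rw [this, Complex.norm_natCast]
      exact_mod_cast Nat.one_le_iff_ne_zero.mpr (Nat.succ_ne_zero k)
    calc 1 - ‖q‖ ≤ ‖(1:ℂ) - q ^ (k+1)‖ := norm_one_sub_pow hq k
    _ ≤ ‖((k : ℂ) + 1)‖ * ‖(1:ℂ) - q ^ (k+1)‖ := le_mul_of_one_le_left (norm_nonneg _) h2
  apply div_le_div_of_nonneg_left (pow_nonneg (norm_nonneg z) _) (by linarith) h1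

lemma summable_sTerm {q z : ℂ} (hq : ‖q‖ < 1) (hz : ‖z‖ < 1) :
    Summable fun k => ‖sTerm q z k‖ := by
  apply Summable.of_nonneg_of_le (fun k => norm_nonneg _) (fun k => norm_sTerm_le hq k)
  apply Summable.div_const
  exact (summable_geometric_of_lt_one (norm_nonneg z) hz).comp_injective
    (add_right_injective 1) |>.congr (fun k => by simp [pow_succ]; ring)


lemma hasSum_log_one_sub {w : ℂ} (hw : ‖w‖ < 1) :
    HasSum (fun k : ℕ => -(w ^ (k + 1) / ((k : ℂ) + 1))) (Complex.log (1 - w)) := by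
  have h := Complex.hasSum_taylorSeries_log (z := -w) (by rwa [norm_neg])
  have h2 : HasSum (fun n : ℕ => -(w ^ n / (n : ℂ))) (Complex.log (1 - w)) := by
    have heq : (1 : ℂ) + -w = 1 - w := by ring
    rw [← heq]
    refine h.congr_fun fun n => ?_
    have hodd : ((-1 : ℂ)) ^ (n + 1) * (-1) ^ n = -1 := by
      rw [← pow_add]; exact Odd.neg_one_pow ⟨n, by ring⟩
    calc (-(w ^ n / (n : ℂ))) = ((-1) ^ (n + 1) * (-1) ^ n) * w ^ n / n := by rw [hodd]; ring
    _ = (-1) ^ (n + 1) * (-w) ^ n / n := by rw [neg_pow w]; ring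
  have key := (hasSum_nat_add_iff' (f := fun n : ℕ => -(w ^ n / (n : ℂ))) 1).mpr h2
  simp only [Finset.range_one, Finset.sum_singleton, Nat.cast_zero, div_zero, neg_zero,
    sub_zero] at key
  exact key.congr_fun fun k => by push_cast; ring_nf

lemma norm_zqn_lt {q z : ℂ} (hq : ‖q‖ < 1) (hz : ‖z‖ < 1) (n : ℕ) : ‖z * q ^ n‖ < 1 := by
  rw [norm_mul, norm_pow]
  calc ‖z‖ * ‖q‖ ^ n ≤ ‖z‖ * 1 :=
        mul_le_mul_of_nonneg_left (pow_le_one₀ (norm_nonneg q) hq.le) (norm_nonneg z)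
  _ = ‖z‖ := mul_one _
  _ < 1 := hz

lemma qPoch_eq {q z : ℂ} (hq : ‖q‖ < 1) (hz : ‖z‖ < 1) :
    qPochInf z q = Complex.exp (-∑' k, sTerm q z k) := by
  have hgs : Summable fun p : ℕ × ℕ => ‖gAux q z p‖ := by
    have hbs : Summable fun p : ℕ × ℕ => (‖q‖ ^ p.1 * ‖z‖ ^ p.2) * ‖z‖ :=
      ((summable_geometric_of_lt_one (norm_nonneg q) hq).mul_of_nonneg
        (summable_geometric_of_lt_one (norm_nonneg z) hz)
        (fun n => pow_nonneg (norm_nonneg q) n)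
        (fun k => pow_nonneg (norm_nonneg z) k)).mul_right _
    apply Summable.of_nonneg_of_le (fun p => norm_nonneg _) _ hbs
    rintro ⟨n, k⟩
    have h1 : (1 : ℝ) ≤ ‖((k : ℂ) + 1)‖ := by
      have : ((k : ℂ) + 1) = ((k + 1 : ℕ) : ℂ) := by push_cast; ring
      rw [this, Complex.norm_natCast]
      exact_mod_cast Nat.one_le_iff_ne_zero.mpr (Nat.succ_ne_zero k)
    have h2 : ‖gAux q z (n, k)‖ ≤ ‖(z * q ^ n) ^ (k + 1)‖ := by
      rw [gAux, norm_neg, norm_div]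
      calc ‖(z * q ^ n) ^ (k + 1)‖ / ‖((k : ℂ) + 1)‖ ≤ ‖(z * q ^ n) ^ (k + 1)‖ / 1 :=
        div_le_div_of_nonneg_left (norm_nonneg _) one_pos h1
      _ = _ := div_one _
    refine h2.trans ?_
    rw [norm_pow, norm_mul, norm_pow, mul_pow, ← pow_mul]
    have h3 : ‖q‖ ^ (n * (k + 1)) ≤ ‖q‖ ^ n :=
      pow_le_pow_of_le_one (norm_nonneg q) hq.le (by nlinarith)
    have h4 : (‖q‖ ^ (n, k).1 * ‖z‖ ^ (n, k).2) * ‖z‖ = ‖q‖ ^ n * ‖z‖ ^ (k + 1) := by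
      simp [pow_succ]; ring
    rw [h4]
    calc ‖z‖ ^ (k + 1) * ‖q‖ ^ (n * (k + 1)) ≤ ‖z‖ ^ (k + 1) * ‖q‖ ^ n :=
      mul_le_mul_of_nonneg_left h3 (pow_nonneg (norm_nonneg z) _)
    _ = ‖q‖ ^ n * ‖z‖ ^ (k + 1) := mul_comm _ _
  have hgsum : Summable (gAux q z) := hgs.of_norm
  have hn : ∀ n : ℕ, HasSum (fun k => gAux q z (n, k)) (Complex.log (1 - z * q ^ n)) := fun n => by
    simpa only [gAux] using hasSum_log_one_sub (norm_zqn_lt hq hz n)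
  have hlogsum : HasSum (fun n => Complex.log (1 - z * q ^ n)) (∑' p, gAux q z p) :=
    HasSum.prod_fiberwise hgsum.hasSum hn
  have hk : ∀ k : ℕ, HasSum (fun n => gAux q z (n, k)) (-sTerm q z k) := by
    intro k
    have hq1 : ‖q ^ (k + 1)‖ < 1 := by
      rw [norm_pow]; exact pow_lt_one₀ (norm_nonneg q) hq (Nat.succ_ne_zero k)
    have hgeo := (hasSum_geometric_of_norm_lt_one hq1).mul_left (-(z ^ (k + 1) / ((k : ℂ) + 1)))
    have heq : (fun n : ℕ => -(z ^ (k + 1) / ((k : ℂ) + 1)) * (q ^ (k + 1)) ^ n)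
        = fun n => gAux q z (n, k) := by
      funext n
      rw [gAux]
      have : (q ^ (k + 1)) ^ n = (q ^ n) ^ (k + 1) := by
        rw [← pow_mul, ← pow_mul]; ring_nf
      rw [this]; ring
    rw [heq] at hgeo
    convert hgeo using 1
    · rfl
    rw [sTerm]
    have hk0 : ((k : ℂ) + 1) ≠ 0 := Nat.cast_add_one_ne_zero k
    have hq0 : (1 : ℂ) - q ^ (k + 1) ≠ 0 := one_sub_pow_ne hq k
    field_simp
  have hgsum' : Summable (gAux q z ∘ (Equiv.prodComm ℕ ℕ)) :=
    ((Equiv.prodComm ℕ ℕ).summable_iff).mpr hgsum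
  have hS : HasSum (fun k => -sTerm q z k) (∑' p, gAux q z ((Equiv.prodComm ℕ ℕ) p)) :=
    HasSum.prod_fiberwise hgsum'.hasSum (fun k => hk k)
  have hteq : (∑' p, gAux q z ((Equiv.prodComm ℕ ℕ) p)) = ∑' p, gAux q z p := (Equiv.prodComm ℕ ℕ).tsum_eq (gAux q z)
  rw [hteq] at hS
  have hfn : ∀ (_ : Unit) (n : ℕ), (1 : ℂ) - z * q ^ n ≠ 0 := by
    intro _ n h
    rw [sub_eq_zero] at h
    have := norm_zqn_lt hq hz n
    rw [← h] at this; simp at this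
  have hexp := Complex.cexp_tsum_eq_tprod (f := fun n => 1 - z * q ^ n) (fun n => hfn () n)
    hlogsum.summable
  have := hexp
  rw [qPochInf, ← this, hlogsum.tsum_eq, hS.tsum_eq.symm, tsum_neg]

lemma norm_cast_succ (n : ℕ) : (1 : ℝ) ≤ ‖((n : ℂ) + 1)‖ := by
  have : ((n : ℂ) + 1) = ((n + 1 : ℕ) : ℂ) := by push_cast; ring
  rw [this, Complex.norm_natCast]
  exact_mod_cast Nat.one_le_iff_ne_zero.mpr (Nat.succ_ne_zero n)

lemma summable_pow_succ {r : ℝ} (h0 : 0 ≤ r) (h1 : r < 1) :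
    Summable fun n : ℕ => r ^ (n + 1) :=
  ((summable_geometric_of_lt_one h0 h1).mul_left r).congr fun n => by rw [pow_succ]; ring

lemma summable_norm_glTerm {q κ d e x : ℂ} (hq : ‖q‖ < 1) (hκ : ‖κ‖ < 1)
    (hx : ‖x‖ < 1) (hdx : ‖d * x‖ < 1) (hex : ‖e * x‖ < 1) (hdex : ‖d * e * x‖ < 1) :
    Summable fun n : ℕ => ‖glTerm q κ d e x n‖ := by
  have hc : (0 : ℝ) < (1 - ‖q‖) * (1 - ‖κ‖) := by
    have := norm_nonneg q; nlinarith
  have hsum : Summable fun n : ℕ => (‖x‖ ^ (n + 1) + ‖d * x‖ ^ (n + 1) + ‖e * x‖ ^ (n + 1)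
      + ‖d * e * x‖ ^ (n + 1)) / ((1 - ‖q‖) * (1 - ‖κ‖)) :=
    ((((summable_pow_succ (norm_nonneg x) hx).add
      (summable_pow_succ (norm_nonneg _) hdx)).add
      (summable_pow_succ (norm_nonneg _) hex)).add
      (summable_pow_succ (norm_nonneg _) hdex)).div_const _
  refine hsum.of_nonneg_of_le (fun n => norm_nonneg _) fun n => ?_
  · 
    have hglTerm : glTerm q κ d e x n
        = ((1 - d ^ (n + 1)) * (1 - e ^ (n + 1)) * x ^ (n + 1))
          / ((n + 1 : ℂ) * (1 - q ^ (n + 1)) * (1 - κ ^ (n + 1))) := by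
      rw [glTerm]; ring
    rw [hglTerm, norm_div]
    have hnum : ‖(1 - d ^ (n + 1)) * (1 - e ^ (n + 1)) * x ^ (n + 1)‖
        ≤ ‖x‖ ^ (n + 1) + ‖d * x‖ ^ (n + 1) + ‖e * x‖ ^ (n + 1) + ‖d * e * x‖ ^ (n + 1) := by
      have hexp : (1 - d ^ (n + 1)) * (1 - e ^ (n + 1)) * x ^ (n + 1)
          = x ^ (n + 1) - (d * x) ^ (n + 1) - (e * x) ^ (n + 1) + (d * e * x) ^ (n + 1) := by
        rw [mul_pow, mul_pow, mul_pow, mul_pow]; ring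
      rw [hexp]
      calc ‖x ^ (n+1) - (d*x) ^ (n+1) - (e*x) ^ (n+1) + (d*e*x) ^ (n+1)‖
          ≤ ‖x ^ (n+1) - (d*x) ^ (n+1) - (e*x) ^ (n+1)‖ + ‖(d*e*x) ^ (n+1)‖ :=
            norm_add_le _ _
        _ ≤ ‖x ^ (n+1) - (d*x) ^ (n+1)‖ + ‖(e*x) ^ (n+1)‖ + ‖(d*e*x) ^ (n+1)‖ := by
            have := norm_sub_le (x ^ (n+1) - (d*x) ^ (n+1)) ((e*x) ^ (n+1)); linarith
        _ ≤ ‖x ^ (n+1)‖ + ‖(d*x) ^ (n+1)‖ + ‖(e*x) ^ (n+1)‖ + ‖(d*e*x) ^ (n+1)‖ := by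
            have := norm_sub_le (x ^ (n+1)) ((d*x) ^ (n+1)); linarith
        _ = ‖x‖ ^ (n+1) + ‖d*x‖ ^ (n+1) + ‖e*x‖ ^ (n+1) + ‖d*e*x‖ ^ (n+1) := by
            simp [norm_pow]
    have hden : (1 - ‖q‖) * (1 - ‖κ‖)
        ≤ ‖((n : ℂ) + 1) * (1 - q ^ (n + 1)) * (1 - κ ^ (n + 1))‖ := by
      rw [norm_mul, norm_mul]
      have h1 := norm_cast_succ n
      have h2 := norm_one_sub_pow hq n
      have h3 := norm_one_sub_pow hκ n
      have h4 : (0:ℝ) ≤ ‖(1:ℂ) - q ^ (n+1)‖ := norm_nonneg _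
      have h5 : (0:ℝ) ≤ ‖(1:ℂ) - κ ^ (n+1)‖ := norm_nonneg _
      have step1 : (1 - ‖q‖) * (1 - ‖κ‖) ≤ ‖(1:ℂ) - q ^ (n+1)‖ * ‖(1:ℂ) - κ ^ (n+1)‖ :=
        mul_le_mul h2 h3 (by linarith) h4
      have step2 : ‖(1:ℂ) - q ^ (n+1)‖ * ‖(1:ℂ) - κ ^ (n+1)‖
          ≤ ‖((n:ℂ) + 1)‖ * ‖(1:ℂ) - q ^ (n+1)‖ * ‖(1:ℂ) - κ ^ (n+1)‖ := by nlinarith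
      linarith
    have hnum0 : (0:ℝ) ≤ ‖(1 - d ^ (n + 1)) * (1 - e ^ (n + 1)) * x ^ (n + 1)‖ :=
      norm_nonneg _
    exact div_le_div₀ (by positivity) hnum hc hden

lemma glTerm_sub {q κ : ℂ} (d e x : ℂ) (hq : ‖q‖ < 1) (hκ : ‖κ‖ < 1) (n : ℕ) :
    glTerm q κ d e x n - glTerm q κ d e (κ * x) n
      = sTerm q x n - sTerm q (d * x) n - sTerm q (e * x) n + sTerm q (d * e * x) n := by
  have hm : ((n : ℂ) + 1) ≠ 0 := Nat.cast_add_one_ne_zero n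
  have hq' := one_sub_pow_ne hq n
  have hκ' := one_sub_pow_ne hκ n
  rw [glTerm, glTerm, sTerm, sTerm, sTerm, sTerm]
  rw [mul_pow κ x, mul_pow (d * e) x, mul_pow d e, mul_pow d x, mul_pow e x]
  field_simp
  ring

/-- **Equation (1.17)**: the exponent series of `ψ` converges absolutely for
`|x| < 1/ρ`, and `ψ` solves the gl₁ non-stationary equation
`H^{gl₁} ψ = ψ`, i.e. `(φ(x)φ(dd̄x)/(φ(dx)φ(d̄x)))·ψ(κx) = ψ(x)`. -/
theorem gl1_equation (q κ d e : ℂ) (hq : ‖q‖ < 1) (hκ : ‖κ‖ < 1) :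
    (∀ x : ℂ,
        ‖x‖ <
          1 / max (max 1 (‖d‖)) (max (‖e‖) (‖d * e‖)) →
        Summable fun n : ℕ => ‖glTerm q κ d e x n‖)
    ∧ (∀ x : ℂ,
        ‖x‖ <
          1 / max (max 1 (‖d‖)) (max (‖e‖) (‖d * e‖)) →
        qPochInf x q * qPochInf (d * e * x) q / (qPochInf (d * x) q * qPochInf (e * x) q)
            * glPsi q κ d e (κ * x)
          = glPsi q κ d e x) := by
  have hq' : ‖q‖ < 1 := hq
  have hκ' : ‖κ‖ < 1 := hκ
  set ρ : ℝ := max (max 1 (‖d‖)) (max (‖e‖) (‖d * e‖)) with hρ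
  have hρ1 : (1 : ℝ) ≤ ρ := le_max_of_le_left (le_max_left _ _)
  have hρ0 : (0 : ℝ) < ρ := lt_of_lt_of_le one_pos hρ1
  have key : ∀ x : ℂ, ‖x‖ < 1 / ρ →
      ‖x‖ < 1 ∧ ‖d * x‖ < 1 ∧ ‖e * x‖ < 1 ∧ ‖d * e * x‖ < 1 := by
    intro x hx
    have hx' : ‖x‖ * ρ < 1 := by
      have h : ‖x‖ < 1 / ρ := hx
      have h2 : ‖x‖ * ρ < (1 / ρ) * ρ := mul_lt_mul_of_pos_right h hρ0
      have h3 : (1 / ρ) * ρ = 1 := by field_simp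
      linarith
    have hxn : (0:ℝ) ≤ ‖x‖ := norm_nonneg x
    have hd : ‖d‖ ≤ ρ := le_max_of_le_left (le_max_right _ _)
    have he : ‖e‖ ≤ ρ := le_max_of_le_right (le_max_left _ _)
    have hde : ‖d * e‖ ≤ ρ := le_max_of_le_right (le_max_right _ _)
    refine ⟨?_, ?_, ?_, ?_⟩
    · nlinarith
    · rw [norm_mul]; nlinarith [norm_nonneg d]
    · rw [norm_mul]; nlinarith [norm_nonneg e]
    · rw [norm_mul]; nlinarith [norm_nonneg (d * e)]
  have part1 : ∀ x : ℂ, ‖x‖ < 1 / ρ →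
      Summable fun n : ℕ => ‖glTerm q κ d e x n‖ := by
    intro x hx
    obtain ⟨h1, h2, h3, h4⟩ := key x hx
    exact summable_norm_glTerm hq' hκ' h1 h2 h3 h4
  refine ⟨part1, ?_⟩
  intro x hx
  obtain ⟨h1, h2, h3, h4⟩ := key x hx
  have hκx : ‖κ * x‖ < 1 / ρ := by
    rw [norm_mul]
    calc ‖κ‖ * ‖x‖ ≤ 1 * ‖x‖ :=
      mul_le_mul_of_nonneg_right hκ.le (norm_nonneg x)
    _ = ‖x‖ := one_mul _
    _ < 1 / ρ := hx
  have hT : Summable fun n => glTerm q κ d e x n := (part1 x hx).of_norm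
  have hTκ : Summable fun n => glTerm q κ d e (κ * x) n := (part1 (κ * x) hκx).of_norm
  have hSx : Summable fun n => sTerm q x n := (summable_sTerm hq' h1).of_norm
  have hSdx : Summable fun n => sTerm q (d * x) n := (summable_sTerm hq' h2).of_norm
  have hSex : Summable fun n => sTerm q (e * x) n := (summable_sTerm hq' h3).of_norm
  have hSdex : Summable fun n => sTerm q (d * e * x) n := (summable_sTerm hq' h4).of_norm
  have hsub : (∑' n, glTerm q κ d e x n) - (∑' n, glTerm q κ d e (κ * x) n)
      = (∑' n, sTerm q x n) - (∑' n, sTerm q (d * x) n) - (∑' n, sTerm q (e * x) n)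
        + (∑' n, sTerm q (d * e * x) n) := by
    rw [← Summable.tsum_sub hT hTκ, ← Summable.tsum_sub hSx hSdx, ← Summable.tsum_sub (hSx.sub hSdx) hSex,
      ← Summable.tsum_add ((hSx.sub hSdx).sub hSex) hSdex]
    exact tsum_congr (glTerm_sub d e x hq' hκ')
  rw [qPoch_eq hq' h1, qPoch_eq hq' h2, qPoch_eq hq' h3, qPoch_eq hq' h4, glPsi, glPsi,
    ← Complex.exp_add, ← Complex.exp_add, ← Complex.exp_sub, ← Complex.exp_add]
  congr 1
  linear_combination hsub
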